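/- Let G = (V, E) be a finite simple graph and let k ≥ 3 be an integer. Let G⁺ be the graph obtained from G by adding k pairwise disjoint new cliques H₁,…,H_k, each on k+2 new vertices, adding every edge between a vertex of V and a new vertex, and adding no edges between distinct cliques H_i and H_j; and let P(G⁺) be the profile constructed from G⁺. Then the votes of P(G⁺) can be partitioned into k subprofiles, each of which is group-separable, if and only if V can be partitioned into k cliques of G. -/

import Mathlib

/-! The construction `P(H)`: the vertex set of the graph `H` is a finite linearly
ordered type `W` (the linear order is the enumeration `u₁, …, u_n` of the vertices).
For each non-adjacent pair `p = (u_i, u_j)` with `u_i < u_j` there is a triple of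
candidates `a^{i,j}, b^{i,j}, c^{i,j}`, encoded as `(p, 0), (p, 1), (p, 2)`. -/

/-- The non-adjacent pairs `(u_i, u_j)` with `i < j` of the graph `H`. -/
abbrev NonEdge {W : Type*} [LinearOrder W] (H : SimpleGraph W) : Type _ :=
  {p : W × W // p.1 < p.2 ∧ ¬ H.Adj p.1 p.2}

/-- The candidate set of the profile `P(H)`: a triple of candidates
`a^{i,j} = (p, 0)`, `b^{i,j} = (p, 1)`, `c^{i,j} = (p, 2)` for each non-edge `p`. -/
abbrev Cand {W : Type*} [LinearOrder W] (H : SimpleGraph W) : Type _ :=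
  NonEdge H × Fin 3

/-- The position (0 = first, 1 = second, 2 = third) that voter `ℓ` assigns to the
candidate `(e, t)` within its triple: voter `u_i` ranks `a ≻ b ≻ c`, voter `u_j`
ranks `b ≻ c ≻ a`, and every other voter ranks `c ≻ a ≻ b`, where `e = (u_i, u_j)`. -/
def localRank {W : Type*} [LinearOrder W] {H : SimpleGraph W}
    (ℓ : W) (e : NonEdge H) (t : Fin 3) : ℕ :=
  if ℓ = e.val.1 then t.val
  else if ℓ = e.val.2 then (t.val + 2) % 3
  else (t.val + 1) % 3

/-- The vote `v_ℓ` of the profile `P(H)`, as the strict linear order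
`voteRel H ℓ x y` meaning "voter `ℓ` ranks candidate `x` above candidate `y`":
triples are ordered lexicographically by their non-edge, and within a triple
candidates are ordered according to `localRank`. -/
def voteRel {W : Type*} [LinearOrder W] (H : SimpleGraph W)
    (ℓ : W) (x y : Cand H) : Prop :=
  (x.1.val.1 < y.1.val.1 ∨ (x.1.val.1 = y.1.val.1 ∧ x.1.val.2 < y.1.val.2)) ∨
  (x.1 = y.1 ∧ localRank ℓ x.1 x.2 < localRank ℓ y.1 y.2)

/-- The subprofile of the profile `(vote p)_{p}` given by the index set `S` is
group-separable: every set `A` of candidates with `|A| ≥ 2` has a nonempty proper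
subset `B ⊊ A` such that every vote of the subprofile ranks all of `B` above all of
`A \ B`, or all of `A \ B` above all of `B`. -/
def GroupSeparableOn {ι C : Type*} [DecidableEq C]
    (vote : ι → C → C → Prop) (S : Set ι) : Prop :=
  ∀ A : Finset C, 2 ≤ A.card →
    ∃ B : Finset C, B.Nonempty ∧ B ⊂ A ∧
      ∀ p ∈ S, (∀ b ∈ B, ∀ x ∈ A \ B, vote p b x) ∨ (∀ b ∈ B, ∀ x ∈ A \ B, vote p x b)

/-- The graph `G⁺` obtained from `G` by adding `k` pairwise disjoint new cliques,
each on `k + 2` new vertices, adding every edge between an old vertex and a new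
vertex, and adding no edges between distinct new cliques. -/
def GPlus {V : Type*} (G : SimpleGraph V) (k : ℕ) :
    SimpleGraph (V ⊕ (Fin k × Fin (k + 2))) where
  Adj x y :=
    match x, y with
    | Sum.inl a, Sum.inl b => G.Adj a b
    | Sum.inl _, Sum.inr _ => True
    | Sum.inr _, Sum.inl _ => True
    | Sum.inr p, Sum.inr q => p.1 = q.1 ∧ p.2 ≠ q.2
  symm := ⟨by
    rintro (a | p) (b | q) h
    · exact G.adj_symm h
    · trivial
    · trivial
    · exact ⟨h.1.symm, h.2.symm⟩⟩
  loopless := ⟨by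
    rintro (a | p) h
    · exact G.irrefl h
    · exact h.2 rfl⟩

/-- The vertex set of `G` can be partitioned into `k` (possibly empty) sets, each of
which induces a complete subgraph. -/
def CliquePartition {V : Type*} (G : SimpleGraph V) (k : ℕ) : Prop :=
  ∃ f : V → Fin k, ∀ x y : V, f x = f y → x ≠ y → G.Adj x y


section Aux
variable {W : Type*} [LinearOrder W] {H : SimpleGraph W}

lemma voteRel_same (p : W) (e : NonEdge H) (s t : Fin 3) :
    voteRel H p (e, s) (e, t) ↔ localRank p e s < localRank p e t := by
  unfold voteRel
  constructor
  · rintro (h | h)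
    · rcases h with h | ⟨_, h⟩ <;> exact absurd h (lt_irrefl _)
    · exact h.2
  · intro h; exact Or.inr ⟨rfl, h⟩

lemma localRank_lt_or_lt (p : W) (e : NonEdge H) {s t : Fin 3} (h : s ≠ t) :
    localRank p e s < localRank p e t ∨ localRank p e t < localRank p e s := by
  have hs := s.isLt; have ht := t.isLt
  have hv : s.val ≠ t.val := fun hv => h (Fin.ext hv)
  unfold localRank
  split_ifs <;> omega

lemma localRank_eq_fst {ℓ : W} {e : NonEdge H} (h : ℓ = e.val.1) (t : Fin 3) :
    localRank ℓ e t = t.val := by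
  unfold localRank; rw [if_pos h]

lemma localRank_eq_snd {ℓ : W} {e : NonEdge H} (h1 : ℓ ≠ e.val.1) (h2 : ℓ = e.val.2)
    (t : Fin 3) : localRank ℓ e t = (t.val + 2) % 3 := by
  unfold localRank; rw [if_neg h1, if_pos h2]

lemma localRank_eq_other {ℓ : W} {e : NonEdge H} (h1 : ℓ ≠ e.val.1) (h2 : ℓ ≠ e.val.2)
    (t : Fin 3) : localRank ℓ e t = (t.val + 1) % 3 := by
  unfold localRank; rw [if_neg h1, if_neg h2]

lemma not_groupSeparableOn {S : Set W} {x y z : W}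
    (hxy : x < y) (hna : ¬ H.Adj x y) (hx : x ∈ S) (hy : y ∈ S) (hz : z ∈ S)
    (hzx : z ≠ x) (hzy : z ≠ y) : ¬ GroupSeparableOn (voteRel H) S := by
  intro hGS
  set e : NonEdge H := ⟨(x, y), hxy, hna⟩ with he
  have hx1 : x = e.val.1 := rfl
  have hy1 : y ≠ e.val.1 := hxy.ne'
  have hy2 : y = e.val.2 := rfl
  have hz1 : z ≠ e.val.1 := hzx
  have hz2 : z ≠ e.val.2 := hzy
  set A : Finset (Cand H) := {(e,0),(e,1),(e,2)} with hA
  have hcard : A.card = 3 := by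
    rw [hA, Finset.card_insert_of_notMem (by simp), Finset.card_insert_of_notMem (by simp),
      Finset.card_singleton]
  obtain ⟨B, hBne, hBss, hvotes⟩ := hGS A (by omega)
  have hBsub := hBss.subset
  by_cases h0 : ((e, 0) : Cand H) ∈ B <;> by_cases h1 : ((e, 1) : Cand H) ∈ B <;>
    by_cases h2 : ((e, 2) : Cand H) ∈ B
  · -- TTT : B = A
    refine hBss.ne (Finset.Subset.antisymm hBsub ?_)
    intro c hc
    rw [hA] at hc
    simp only [Finset.mem_insert, Finset.mem_singleton] at hc
    rcases hc with rfl | rfl | rfl <;> assumption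
  · -- TTF : B = {a,b}, voter y
    rcases hvotes y hy with h | h
    · have := (voteRel_same y e 0 2).mp
        (h (e,0) h0 (e,2) (Finset.mem_sdiff.mpr ⟨by simp [hA], h2⟩))
      rw [localRank_eq_snd hy1 hy2, localRank_eq_snd hy1 hy2] at this
      exact absurd this (by decide)
    · have := (voteRel_same y e 2 1).mp
        (h (e,1) h1 (e,2) (Finset.mem_sdiff.mpr ⟨by simp [hA], h2⟩))
      rw [localRank_eq_snd hy1 hy2, localRank_eq_snd hy1 hy2] at this
      exact absurd this (by decide)
  · -- TFT : B = {a,c}, voter x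
    rcases hvotes x hx with h | h
    · have := (voteRel_same x e 2 1).mp
        (h (e,2) h2 (e,1) (Finset.mem_sdiff.mpr ⟨by simp [hA], h1⟩))
      rw [localRank_eq_fst hx1, localRank_eq_fst hx1] at this
      exact absurd this (by decide)
    · have := (voteRel_same x e 1 0).mp
        (h (e,0) h0 (e,1) (Finset.mem_sdiff.mpr ⟨by simp [hA], h1⟩))
      rw [localRank_eq_fst hx1, localRank_eq_fst hx1] at this
      exact absurd this (by decide)
  · -- TFF : B = {a}, voter z
    rcases hvotes z hz with h | h
    · have := (voteRel_same z e 0 2).mp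
        (h (e,0) h0 (e,2) (Finset.mem_sdiff.mpr ⟨by simp [hA], h2⟩))
      rw [localRank_eq_other hz1 hz2, localRank_eq_other hz1 hz2] at this
      exact absurd this (by decide)
    · have := (voteRel_same z e 1 0).mp
        (h (e,0) h0 (e,1) (Finset.mem_sdiff.mpr ⟨by simp [hA], h1⟩))
      rw [localRank_eq_other hz1 hz2, localRank_eq_other hz1 hz2] at this
      exact absurd this (by decide)
  · -- FTT : B = {b,c}, voter z
    rcases hvotes z hz with h | h
    · have := (voteRel_same z e 1 0).mp
        (h (e,1) h1 (e,0) (Finset.mem_sdiff.mpr ⟨by simp [hA], h0⟩))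
      rw [localRank_eq_other hz1 hz2, localRank_eq_other hz1 hz2] at this
      exact absurd this (by decide)
    · have := (voteRel_same z e 0 2).mp
        (h (e,2) h2 (e,0) (Finset.mem_sdiff.mpr ⟨by simp [hA], h0⟩))
      rw [localRank_eq_other hz1 hz2, localRank_eq_other hz1 hz2] at this
      exact absurd this (by decide)
  · -- FTF : B = {b}, voter x
    rcases hvotes x hx with h | h
    · have := (voteRel_same x e 1 0).mp
        (h (e,1) h1 (e,0) (Finset.mem_sdiff.mpr ⟨by simp [hA], h0⟩))
      rw [localRank_eq_fst hx1, localRank_eq_fst hx1] at this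
      exact absurd this (by decide)
    · have := (voteRel_same x e 2 1).mp
        (h (e,1) h1 (e,2) (Finset.mem_sdiff.mpr ⟨by simp [hA], h2⟩))
      rw [localRank_eq_fst hx1, localRank_eq_fst hx1] at this
      exact absurd this (by decide)
  · -- FFT : B = {c}, voter y
    rcases hvotes y hy with h | h
    · have := (voteRel_same y e 2 1).mp
        (h (e,2) h2 (e,1) (Finset.mem_sdiff.mpr ⟨by simp [hA], h1⟩))
      rw [localRank_eq_snd hy1 hy2, localRank_eq_snd hy1 hy2] at this
      exact absurd this (by decide)
    · have := (voteRel_same y e 0 2).mp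
        (h (e,2) h2 (e,0) (Finset.mem_sdiff.mpr ⟨by simp [hA], h0⟩))
      rw [localRank_eq_snd hy1 hy2, localRank_eq_snd hy1 hy2] at this
      exact absurd this (by decide)
  · -- FFF : B empty
    obtain ⟨c, hc⟩ := hBne
    have := hBsub hc
    rw [hA] at this
    simp only [Finset.mem_insert, Finset.mem_singleton] at this
    rcases this with rfl | rfl | rfl <;> [exact h0 hc; exact h1 hc; exact h2 hc]

lemma not_groupSeparableOn' {S : Set W} {x y z : W}
    (hxy : x ≠ y) (hna : ¬ H.Adj x y) (hx : x ∈ S) (hy : y ∈ S) (hz : z ∈ S)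
    (hzx : z ≠ x) (hzy : z ≠ y) : ¬ GroupSeparableOn (voteRel H) S := by
  rcases hxy.lt_or_gt with h | h
  · exact not_groupSeparableOn h hna hx hy hz hzx hzy
  · exact not_groupSeparableOn h (fun a => hna a.symm) hy hx hz hzy hzx

end Aux

section Aux2
variable {W : Type*} [LinearOrder W] {H : SimpleGraph W}

lemma groupSeparableOn_of_clique {S : Set W}
    (hS : ∀ x ∈ S, ∀ y ∈ S, x ≠ y → H.Adj x y) :
    GroupSeparableOn (voteRel H) S := by
  intro A hA
  by_cases hsingle : ∀ c ∈ A, ∀ d ∈ A, c.1 = d.1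
  · -- all candidates in a single triple
    obtain ⟨c0, hc0⟩ := Finset.card_pos.mp (by omega : 0 < A.card)
    set e := c0.1 with hedef
    have hsub : A ⊆ {(e,0),(e,1),(e,2)} := by
      intro c hc
      have hce : c.1 = e := hsingle c hc c0 hc0
      have hc2 : c.2 = 0 ∨ c.2 = 1 ∨ c.2 = 2 := by
        have := c.2.isLt
        simp only [Fin.ext_iff]
        omega
      have hceq : c = (e, c.2) := Prod.ext_iff.mpr ⟨hce, rfl⟩
      rcases hc2 with h | h | h <;> rw [hceq, h] <;> simp
    have hcard3 : ({(e,0),(e,1),(e,2)} : Finset (Cand H)).card = 3 := by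
      rw [Finset.card_insert_of_notMem (by simp), Finset.card_insert_of_notMem (by simp),
        Finset.card_singleton]
    have hAle : A.card ≤ 3 := hcard3 ▸ Finset.card_le_card hsub
    rcases (by omega : A.card = 2 ∨ A.card = 3) with h2 | h3
    · -- two candidates
      obtain ⟨u, v, huv, rfl⟩ := Finset.card_eq_two.mp h2
      have hfst : v.1 = u.1 := hsingle v (by simp) u (by simp)
      have hveq : v = (u.1, v.2) := Prod.ext_iff.mpr ⟨hfst, rfl⟩
      have hsnd : v.2 ≠ u.2 := by
        intro h
        exact huv.symm (Prod.ext_iff.mpr ⟨hfst, h⟩)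
      refine ⟨{v}, Finset.singleton_nonempty v, ?_, ?_⟩
      · have : ({u, v} : Finset (Cand H)) = insert u {v} := rfl
        rw [this]
        exact Finset.ssubset_insert (by simp [huv])
      · intro p _
        have key : ∀ x ∈ ({u, v} : Finset (Cand H)) \ {v}, x = u := by
          intro x hx
          simp only [Finset.mem_sdiff, Finset.mem_insert, Finset.mem_singleton] at hx
          tauto
        rcases localRank_lt_or_lt p u.1 hsnd with h | h
        · left
          intro b hb x hx
          rw [Finset.mem_singleton] at hb
          rw [hb, key x hx, hveq]
          exact (voteRel_same p u.1 v.2 u.2).mpr h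
        · right
          intro b hb x hx
          rw [Finset.mem_singleton] at hb
          rw [hb, key x hx, hveq]
          exact (voteRel_same p u.1 u.2 v.2).mpr h
    · -- the full triple
      have hAeq : A = {(e,0),(e,1),(e,2)} :=
        Finset.eq_of_subset_of_card_le hsub (by omega)
      have hnb : e.val.1 ∉ S ∨ e.val.2 ∉ S := by
        by_contra hcon
        push_neg at hcon
        exact e.prop.2 (hS _ hcon.1 _ hcon.2 (ne_of_lt e.prop.1))
      rcases hnb with hiS | hjS
      · -- first voter not in S : B = {b^e}
        refine ⟨{(e,1)}, Finset.singleton_nonempty _, ?_, ?_⟩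
        · refine (Finset.ssubset_iff_of_subset (by simp [hAeq])).mpr ⟨(e,0), by simp [hAeq], by simp⟩
        · intro p hp
          have hp1 : p ≠ e.val.1 := fun h => hiS (h ▸ hp)
          have hmem : ∀ x ∈ A \ {(e,(1:Fin 3))}, x = (e,0) ∨ x = (e,2) := by
            intro x hx
            rw [hAeq] at hx
            simp only [Finset.mem_sdiff, Finset.mem_insert, Finset.mem_singleton] at hx
            tauto
          by_cases hp2 : p = e.val.2
          · left
            intro b hb x hx
            rw [Finset.mem_singleton] at hb
            rcases hmem x hx with rfl | rfl <;> rw [hb] <;>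
              refine (voteRel_same p e _ _).mpr ?_ <;>
              rw [localRank_eq_snd hp1 hp2, localRank_eq_snd hp1 hp2] <;> decide
          · right
            intro b hb x hx
            rw [Finset.mem_singleton] at hb
            rcases hmem x hx with rfl | rfl <;> rw [hb] <;>
              refine (voteRel_same p e _ _).mpr ?_ <;>
              rw [localRank_eq_other hp1 hp2, localRank_eq_other hp1 hp2] <;> decide
      · -- second voter not in S : B = {c^e}
        refine ⟨{(e,2)}, Finset.singleton_nonempty _, ?_, ?_⟩
        · refine (Finset.ssubset_iff_of_subset (by simp [hAeq])).mpr ⟨(e,0), by simp [hAeq], by simp⟩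
        · intro p hp
          have hp2 : p ≠ e.val.2 := fun h => hjS (h ▸ hp)
          have hmem : ∀ x ∈ A \ {(e,(2:Fin 3))}, x = (e,0) ∨ x = (e,1) := by
            intro x hx
            rw [hAeq] at hx
            simp only [Finset.mem_sdiff, Finset.mem_insert, Finset.mem_singleton] at hx
            tauto
          by_cases hp1 : p = e.val.1
          · right
            intro b hb x hx
            rw [Finset.mem_singleton] at hb
            rcases hmem x hx with rfl | rfl <;> rw [hb] <;>
              refine (voteRel_same p e _ _).mpr ?_ <;>
              rw [localRank_eq_fst hp1, localRank_eq_fst hp1] <;> decide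
          · left
            intro b hb x hx
            rw [Finset.mem_singleton] at hb
            rcases hmem x hx with rfl | rfl <;> rw [hb] <;>
              refine (voteRel_same p e _ _).mpr ?_ <;>
              rw [localRank_eq_other hp1 hp2, localRank_eq_other hp1 hp2] <;> decide
  · -- candidates from at least two triples
    push_neg at hsingle
    obtain ⟨c, hcA, d, hdA, hcd⟩ := hsingle
    set T : Finset (Lex (W × W)) := A.image (fun c => toLex c.1.val) with hT
    have hTne : T.Nonempty := ⟨_, Finset.mem_image_of_mem _ hcA⟩
    set m := T.min' hTne with hm
    refine ⟨A.filter (fun c => toLex c.1.val = m), ?_, ?_, ?_⟩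
    · obtain ⟨c', hc', hc'm⟩ := Finset.mem_image.mp (T.min'_mem hTne)
      exact ⟨c', Finset.mem_filter.mpr ⟨hc', hc'm⟩⟩
    · refine (Finset.ssubset_iff_of_subset (Finset.filter_subset _ _)).mpr ?_
      have hne : toLex c.1.val ≠ toLex d.1.val := by
        intro h
        exact hcd (Subtype.ext (toLex_inj.mp h))
      by_cases h : toLex c.1.val = m
      · exact ⟨d, hdA, fun hdf => hne (h.trans ((Finset.mem_filter.mp hdf).2).symm)⟩
      · exact ⟨c, hcA, fun hcf => h (Finset.mem_filter.mp hcf).2⟩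
    · intro p _
      left
      intro b hb x hx
      rw [Finset.mem_filter] at hb
      rw [Finset.mem_sdiff] at hx
      have hxm : m < toLex x.1.val := by
        refine lt_of_le_of_ne (Finset.min'_le _ _ (Finset.mem_image_of_mem _ hx.1)) ?_
        intro h
        exact hx.2 (Finset.mem_filter.mpr ⟨hx.1, h.symm⟩)
      rw [← hb.2] at hxm
      exact Or.inl (Prod.Lex.lt_iff.mp hxm)

end Aux2

/-- For `k ≥ 3` and any enumeration (linear order) of the vertices of `G⁺`, the
votes of the profile `P(G⁺)` can be partitioned into `k` subprofiles, each
group-separable, if and only if the vertex set of `G` can be partitioned into `k`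
cliques. -/
theorem groupSeparable_partition_iff_cliquePartition
    {V : Type*} [Fintype V] (G : SimpleGraph V) (k : ℕ) (hk : 3 ≤ k)
    [LinearOrder (V ⊕ (Fin k × Fin (k + 2)))] :
    (∃ f : (V ⊕ (Fin k × Fin (k + 2))) → Fin k,
        ∀ i : Fin k, GroupSeparableOn (voteRel (GPlus G k)) {w | f w = i}) ↔
      CliquePartition G k := by
  
  constructor
  · rintro ⟨f, hf⟩
    have key : ∀ i : Fin k, ∃ j : Fin k, ∃ c₁ c₂ : Fin (k+2), c₁ ≠ c₂ ∧
        f (Sum.inr (i, c₁)) = j ∧ f (Sum.inr (i, c₂)) = j := by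
      intro i
      obtain ⟨d₁, d₂, hne, heq⟩ := Fintype.exists_ne_map_eq_of_card_lt
        (fun c : Fin (k+2) => f (Sum.inr (i, c))) (by simp)
      exact ⟨_, d₁, d₂, hne, rfl, heq.symm⟩
    choose g c₁ c₂ hcne hc₁ hc₂ using key
    have hginj : Function.Injective g := by
      intro i i' hgi
      by_contra hne
      refine not_groupSeparableOn' (H := GPlus G k) (S := {w | f w = g i})
        (x := Sum.inr (i, c₁ i)) (y := Sum.inr (i', c₁ i')) (z := Sum.inr (i, c₂ i))
        ?_ ?_ ?_ ?_ ?_ ?_ ?_ (hf (g i))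
      · simp [hne]
      · intro hadj
        exact hne hadj.1
      · exact hc₁ i
      · show f (Sum.inr (i', c₁ i')) = g i
        rw [hc₁ i', hgi]
      · exact hc₂ i
      · simp [(hcne i).symm]
      · simp [hne]
    have hgbij : Function.Bijective g := Finite.injective_iff_bijective.mp hginj
    let gE := Equiv.ofBijective g hgbij
    refine ⟨fun v => gE.symm (f (Sum.inl v)), ?_⟩
    intro v w hvw hvwne
    by_contra hadj
    have hfvw : f (Sum.inl v) = f (Sum.inl w) := by
      have := congrArg gE hvw
      simpa using this
    have hfv : g (gE.symm (f (Sum.inl v))) = f (Sum.inl v) := gE.apply_symm_apply _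
    refine absurd (hf (f (Sum.inl v)))
      (not_groupSeparableOn' (H := GPlus G k) (S := {w' | f w' = f (Sum.inl v)})
        (x := Sum.inl v) (y := Sum.inl w)
        (z := Sum.inr (gE.symm (f (Sum.inl v)), c₁ (gE.symm (f (Sum.inl v)))))
        ?_ ?_ rfl hfvw.symm ?_ ?_ ?_)
    · simpa using hvwne
    · exact hadj
    · show f _ = f (Sum.inl v)
      rw [hc₁, hfv]
    · simp
    · simp
  · rintro ⟨f', hf'⟩
    refine ⟨Sum.elim f' (fun p => p.1), fun i => groupSeparableOn_of_clique ?_⟩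
    rintro (a | p) hx (b | q) hy hne
    · exact hf' a b (hx.trans hy.symm) (fun h => hne (congrArg _ h))
    · trivial
    · trivial
    · refine ⟨hx.trans hy.symm, fun h => hne ?_⟩
      have : p = q := Prod.ext_iff.mpr ⟨hx.trans hy.symm, h⟩
      rw [this]
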